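/- Let q be a prime power, F a finite extension field of GF(q), and let α₁, …, αₙ be pairwise distinct nonzero elements of F. Then the q-ary Goppa codes Γ(L, X^q) and Γ(L, X^{q−1}) coincide; that is, for every c ∈ GF(q)ⁿ, X^{q−1} divides Σᵢ cᵢ ∏_{j≠i}(X − αⱼ) in F[X] if and only if X^q divides Σᵢ cᵢ ∏_{j≠i}(X − αⱼ) in F[X]. -/

import Mathlib

open Polynomial Finset

/-- The syndrome polynomial `Σᵢ cᵢ ∏_{j≠i} (X − αⱼ)` of a word `c ∈ GF(q)ⁿ` with respect to
the locator tuple `α`, with coefficients viewed in the extension field `F`. -/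
noncomputable def goppaSum {K F : Type*} [Field K] [Field F] [Algebra K F] {n : ℕ}
    (α : Fin n → F) (c : Fin n → K) : Polynomial F :=
  ∑ i, Polynomial.C (algebraMap K F (c i)) *
    ∏ j ∈ Finset.univ.erase i, (Polynomial.X - Polynomial.C (α j))

lemma aux_prod_mod {F : Type*} [Field F] (q : ℕ) {ι : Type*} [DecidableEq ι] (s : Finset ι) (b : ι → F) :
    (X : F[X])^q ∣ ∏ j ∈ s, ((X:F[X])^q - C (b j)) - C (∏ j ∈ s, (-(b j))) := by
  induction s using Finset.induction with
  | empty => simp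
  | @insert a s h ih =>
    rw [Finset.prod_insert h, Finset.prod_insert h]
    have key : ((X:F[X])^q - C (b a)) * (∏ j ∈ s, ((X:F[X])^q - C (b j)))
        - C ((-(b a)) * ∏ j ∈ s, (-(b j)))
        = X^q * (∏ j ∈ s, ((X:F[X])^q - C (b j)))
          - C (b a) * ((∏ j ∈ s, ((X:F[X])^q - C (b j))) - C (∏ j ∈ s, (-(b j)))) := by
      rw [map_mul, map_neg]; ring
    rw [key]
    exact dvd_sub (dvd_mul_right _ _) (ih.mul_left _)

lemma goppa_dvd_iff {K F : Type*} [Field K] [Field F] [Algebra K F] {n : ℕ}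
    (q : ℕ) (hq : 1 ≤ q) {m : ℕ} (hm : m ≤ q)
    (α : Fin n → F) (h0 : ∀ i, α i ≠ 0) (c : Fin n → K) :
    (X ^ m ∣ goppaSum α c) ↔
      ∀ k < m, (∑ i, algebraMap K F (c i) * ((α i)⁻¹) ^ (k + 1)) = 0 := by
  classical
  set c' : Fin n → F := fun i => algebraMap K F (c i) with hc'
  set g : F → F[X] := fun a => ∑ i ∈ range q, C (a ^ (q - 1 - i)) * X ^ i with hg
  have hg_mul : ∀ a : F, g a * (X - C a) = X ^ q - C (a ^ q) := by
    intro a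
    have h1 : g a = ∑ i ∈ range q, (X : F[X]) ^ i * (C a) ^ (q - 1 - i) :=
      Finset.sum_congr rfl fun i _ => by rw [C_pow, mul_comm]
    rw [h1, geom_sum₂_mul, C_pow]
  have hg_coeff : ∀ (a : F), ∀ k < q, (g a).coeff k = a ^ (q - 1 - k) := by
    intro a k hk
    rw [hg]
    simp only [finset_sum_coeff, coeff_C_mul_X_pow]
    rw [Finset.sum_ite_eq]
    simp [Finset.mem_range.mpr hk]
  set G : F[X] := ∏ j, g (α j) with hG
  set S : F[X] := goppaSum α c with hS
  set d : Fin n → F := fun i => c' i * ∏ j ∈ Finset.univ.erase i, (-(α j ^ q)) with hd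
  set T : F[X] := ∑ i, C (d i) * g (α i) with hT
  -- Step 1: S * G expansion
  have hSG : S * G = ∑ i, C (c' i) * g (α i) *
      ∏ j ∈ Finset.univ.erase i, ((X : F[X]) ^ q - C (α j ^ q)) := by
    rw [hS, goppaSum, Finset.sum_mul]
    refine Finset.sum_congr rfl fun i _ => ?_
    have h2 : G = g (α i) * ∏ j ∈ Finset.univ.erase i, g (α j) :=
      (Finset.mul_prod_erase univ _ (mem_univ i)).symm
    rw [h2]
    calc C (c' i) * (∏ j ∈ Finset.univ.erase i, (X - C (α j))) *
          (g (α i) * ∏ j ∈ Finset.univ.erase i, g (α j))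
        = C (c' i) * g (α i) *
          ∏ j ∈ Finset.univ.erase i, (g (α j) * (X - C (α j))) := by
          rw [Finset.prod_mul_distrib]; ring
      _ = _ := by rw [Finset.prod_congr rfl fun j _ => hg_mul (α j)]
  -- Step 2: X^q divides S*G - T
  have hdvd : (X : F[X]) ^ q ∣ S * G - T := by
    rw [hSG, hT, ← Finset.sum_sub_distrib]
    refine Finset.dvd_sum fun i _ => ?_
    have h3 : C (c' i) * g (α i) * ∏ j ∈ Finset.univ.erase i, ((X : F[X]) ^ q - C (α j ^ q))
        - C (d i) * g (α i)
        = (C (c' i) * g (α i)) *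
          (∏ j ∈ Finset.univ.erase i, ((X : F[X]) ^ q - C (α j ^ q))
            - C (∏ j ∈ Finset.univ.erase i, (-(α j ^ q)))) := by
      rw [hd, map_mul, map_prod]; ring
    rw [h3]
    exact (aux_prod_mod q _ _).mul_left _
  -- Step 3: coefficients of T
  have hB : ∀ i : Fin n, ∀ k < q, d i * α i ^ (q - 1 - k)
      = -(∏ j, (-(α j ^ q))) * (c' i * ((α i)⁻¹) ^ (k + 1)) := by
    intro i k hk
    have h4 : (-(α i ^ q)) * ∏ j ∈ Finset.univ.erase i, (-(α j ^ q)) = ∏ j, (-(α j ^ q)) :=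
      Finset.mul_prod_erase univ (fun j => -(α j ^ q)) (mem_univ i)
    have h5 : α i ^ q = α i ^ (q - 1 - k) * α i ^ (k + 1) := by
      rw [← pow_add]; congr 1; omega
    rw [hd, ← h4, h5]
    have hα := h0 i
    field_simp
    rw [mul_assoc _ (α i ^ (k + 1)), ← mul_pow, mul_one_div_cancel hα, one_pow, mul_one]
  have hBne : (∏ j, (-(α j ^ q)) : F) ≠ 0 :=
    Finset.prod_ne_zero_iff.mpr fun j _ => neg_ne_zero.mpr (pow_ne_zero _ (h0 j))
  have hTcoeff : ∀ k < q, T.coeff k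
      = -(∏ j, (-(α j ^ q))) * ∑ i, c' i * ((α i)⁻¹) ^ (k + 1) := by
    intro k hk
    rw [hT, finset_sum_coeff, Finset.mul_sum]
    refine Finset.sum_congr rfl fun i _ => ?_
    rw [coeff_C_mul, hg_coeff (α i) k hk, hB i k hk]
  -- Step 4: transfer divisibility
  have hGne : ¬ (X : F[X]) ∣ G := by
    rw [X_dvd_iff, coeff_zero_eq_eval_zero, hG, eval_prod]
    refine Finset.prod_ne_zero_iff.mpr fun j _ => ?_
    rw [← coeff_zero_eq_eval_zero, hg_coeff (α j) 0 hq]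
    exact pow_ne_zero _ (h0 j)
  have hcop : IsCoprime ((X : F[X]) ^ m) G :=
    ((Polynomial.prime_X.coprime_iff_not_dvd).mpr hGne).pow_left
  have hiff : (X : F[X]) ^ m ∣ S ↔ (X : F[X]) ^ m ∣ T := by
    constructor
    · intro h
      have h6 : (X : F[X]) ^ m ∣ S * G := h.mul_right _
      have h7 : (X : F[X]) ^ m ∣ S * G - T := (pow_dvd_pow X hm).trans hdvd
      have := dvd_sub h6 h7
      simpa using this
    · intro h
      have h7 : (X : F[X]) ^ m ∣ S * G := by
        have := dvd_add h ((pow_dvd_pow X hm).trans hdvd)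
        simpa using this
      exact hcop.dvd_of_dvd_mul_right h7
  rw [hiff, X_pow_dvd_iff]
  constructor
  · intro h k hk
    have := h k hk
    rw [hTcoeff k (lt_of_lt_of_le hk hm)] at this
    rcases mul_eq_zero.mp this with h' | h'
    · exact absurd h' (neg_ne_zero.mpr hBne)
    · exact h'
  · intro h k hk
    rw [hTcoeff k (lt_of_lt_of_le hk hm), h k hk, mul_zero]

/-- for pairwise distinct nonzero locators, the Goppa codes `Γ(L, X^q)` and
`Γ(L, X^{q−1})` coincide, where `q` is the cardinality of the base field `GF(q)`. -/
theorem goppa_code_Xq_eq_Xq_sub_one {K F : Type*} [Field K] [Fintype K]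
    [Field F] [Fintype F] [Algebra K F] {n : ℕ}
    (α : Fin n → F) (hα : Function.Injective α) (h0 : ∀ i, α i ≠ 0)
    (c : Fin n → K) :
    (Polynomial.X ^ (Fintype.card K - 1) ∣ goppaSum α c) ↔
      (Polynomial.X ^ (Fintype.card K) ∣ goppaSum α c) := by
  classical
  have hq2 : 1 < Fintype.card K := Fintype.one_lt_card
  rw [goppa_dvd_iff (Fintype.card K) (by omega) (Nat.sub_le _ 1) α h0 c,
      goppa_dvd_iff (Fintype.card K) (by omega) (le_refl _) α h0 c]
  constructor
  · intro h k hk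
    by_cases hk' : k < Fintype.card K - 1
    · exact h k hk'
    · have hkq : k = Fintype.card K - 1 := by omega
      subst hkq
      have hq : Fintype.card K - 1 + 1 = Fintype.card K := by omega
      rw [hq]
      obtain ⟨p, hp⟩ := CharP.exists K
      haveI := hp
      obtain ⟨nn, hpp, hcard⟩ := FiniteField.card K p
      haveI : Fact p.Prime := ⟨hpp⟩
      haveI : CharP F p := charP_of_injective_algebraMap (algebraMap K F).injective p
      haveI : ExpChar F p := ExpChar.prime hpp
      have hsum : (∑ i, algebraMap K F (c i) * ((α i)⁻¹) ^ (Fintype.card K))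
          = (∑ i, algebraMap K F (c i) * (α i)⁻¹) ^ (Fintype.card K) := by
        rw [hcard, sum_pow_char_pow]
        refine Finset.sum_congr rfl fun i _ => ?_
        rw [mul_pow, ← map_pow, ← hcard, FiniteField.pow_card]
      rw [hsum]
      have h1 := h 0 (by omega)
      simp only [zero_add, pow_one] at h1
      rw [h1, zero_pow (by omega)]
  · intro h k hk
    exact h k (by omega)
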